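/- For all integers m ≥ 2, p with ⌊(p−1)^{1/m}⌋ ≥ 3 (which holds whenever p is sufficiently large compared with m), and k ≥ ⌊(p−1)^{1/m}⌋ − 1, we have g^k_{⌊(p−1)^{1/m}⌋−1}(p) ≥ (k+1)^m + 1; that is, there is a Gallai-k-coloring of the complete graph on (k+1)^m vertices in which every set of p vertices spans edges in at least ⌊(p−1)^{1/m}⌋ colors. -/

import Mathlib

open Finset

/-- A Gallai coloring: a symmetric edge-coloring of the complete graph on `V`
with no rainbow triangle. -/
def IsGallai {V β : Type*} (c : V → V → β) : Prop :=
  (∀ a b, c a b = c b a) ∧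
  ∀ a b d : V, a ≠ b → a ≠ d → b ≠ d →
    ¬(c a b ≠ c a d ∧ c a b ≠ c b d ∧ c a d ≠ c b d)

/-- The set of colors appearing on edges inside the vertex set `S`. -/
def colorsOn {V β : Type*} [DecidableEq V] [DecidableEq β]
    (c : V → V → β) (S : Finset V) : Finset β :=
  ((S ×ˢ S).filter fun p => p.1 ≠ p.2).image fun p => c p.1 p.2

/-- `gallaiNum k q p` is the smallest positive `n` such that every Gallai-`k`-coloring
of `K_n` contains a set of `p` vertices whose induced edges use at most `q` colors. -/
noncomputable def gallaiNum (k q p : ℕ) : ℕ :=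
  sInf {n : ℕ | 0 < n ∧ ∀ c : Fin n → Fin n → Fin k, IsGallai c →
    ∃ S : Finset (Fin n), S.card = p ∧ (colorsOn c S).card ≤ q}

/-! ### Auxiliary lemmas -/

lemma mem_colorsOn_iff {V β : Type*} [DecidableEq V] [DecidableEq β]
    {c : V → V → β} {S : Finset V} {x : β} :
    x ∈ colorsOn c S ↔ ∃ u ∈ S, ∃ v ∈ S, u ≠ v ∧ c u v = x := by
  simp only [colorsOn, Finset.mem_image, Finset.mem_filter, Finset.mem_product, Prod.exists]
  constructor
  · rintro ⟨a, b, ⟨⟨ha, hb⟩, hne⟩, rfl⟩; exact ⟨a, ha, b, hb, hne, rfl⟩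
  · rintro ⟨a, ha, b, hb, hne, rfl⟩; exact ⟨a, b, ⟨⟨ha, hb⟩, hne⟩, rfl⟩

lemma fin_val_min {n : ℕ} (a b : Fin n) : (min a b).val = min a.val b.val := by
  rcases le_total a b with h | h
  · rw [min_eq_left h]; have := Fin.le_def.mp h; omega
  · rw [min_eq_right h]; have := Fin.le_def.mp h; omega

lemma min3 {n : ℕ} (a b d : Fin n) :
    min a b = min a d ∨ min a b = min b d ∨ min a d = min b d := by
  have h := fin_val_min a b
  have h2 := fin_val_min a d
  have h3 := fin_val_min b d
  rcases (by omega : min a.val b.val = min a.val d.val ∨ min a.val b.val = min b.val d.val ∨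
      min a.val d.val = min b.val d.val) with h4 | h4 | h4
  · exact Or.inl (Fin.val_injective (by omega))
  · exact Or.inr (Or.inl (Fin.val_injective (by omega)))
  · exact Or.inr (Or.inr (Fin.val_injective (by omega)))

/-- The lexicographic-product ("first differing coordinate") coloring on words. -/
def mcolor (k : ℕ) : (m : ℕ) → (Fin m → Fin (k + 1)) → (Fin m → Fin (k + 1)) → Fin (k + 1)
  | 0, _, _ => 0
  | (m + 1), u, v =>
      if u 0 = v 0 then mcolor k m (Fin.tail u) (Fin.tail v) else min (u 0) (v 0)

lemma mcolor_comm (k : ℕ) : ∀ (m : ℕ) (u v : Fin m → Fin (k + 1)),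
    mcolor k m u v = mcolor k m v u := by
  intro m
  induction m with
  | zero => intro u v; rfl
  | succ m ih =>
      intro u v
      simp only [mcolor]
      by_cases h : u 0 = v 0
      · rw [if_pos h, if_pos h.symm, ih]
      · rw [if_neg h, if_neg (Ne.symm h), min_comm]

lemma eq_of_head_tail {k m : ℕ} {u v : Fin (m + 1) → Fin (k + 1)}
    (h0 : u 0 = v 0) (ht : Fin.tail u = Fin.tail v) : u = v := by
  rw [← Fin.cons_self_tail u, ← Fin.cons_self_tail v, h0, ht]

lemma mcolor_lt (k : ℕ) : ∀ (m : ℕ) (u v : Fin m → Fin (k + 1)), u ≠ v →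
    (mcolor k m u v).val < k := by
  intro m
  induction m with
  | zero =>
      intro u v huv
      exact absurd (funext fun i => absurd i.isLt (by omega)) huv
  | succ m ih =>
      intro u v huv
      simp only [mcolor]
      by_cases h : u 0 = v 0
      · rw [if_pos h]
        exact ih _ _ fun ht => huv (eq_of_head_tail h ht)
      · rw [if_neg h]
        have h1 := fin_val_min (u 0) (v 0)
        have h2 : (u 0).val ≠ (v 0).val := fun he => h (Fin.val_injective he)
        have h3 := (u 0).isLt
        have h4 := (v 0).isLt
        omega

lemma mcolor_gallai (k : ℕ) : ∀ (m : ℕ) (u v w : Fin m → Fin (k + 1)),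
    mcolor k m u v = mcolor k m u w ∨ mcolor k m u v = mcolor k m v w ∨
      mcolor k m u w = mcolor k m v w := by
  intro m
  induction m with
  | zero => intro u v w; exact Or.inl rfl
  | succ m ih =>
      intro u v w
      simp only [mcolor]
      by_cases hab : u 0 = v 0 <;> by_cases had : u 0 = w 0
      · have hbd : v 0 = w 0 := hab ▸ had
        rw [if_pos hab, if_pos had, if_pos hbd]
        exact ih _ _ _
      · have hbd : v 0 ≠ w 0 := fun h => had (hab ▸ h)
        rw [if_pos hab, if_neg had, if_neg hbd, hab]
        exact Or.inr (Or.inr rfl)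
      · have hbd : v 0 ≠ w 0 := fun h => hab (had ▸ h.symm)
        rw [if_neg hab, if_pos had, if_neg hbd, had, min_comm]
        exact Or.inr (Or.inl rfl)
      · rw [if_neg hab, if_neg had]
        by_cases hbd : v 0 = w 0
        · rw [hbd]
          exact Or.inl rfl
        · rw [if_neg hbd]
          exact min3 _ _ _

lemma mcolor_card (k : ℕ) : ∀ (m : ℕ) (S : Finset (Fin m → Fin (k + 1))) (s : ℕ),
    (colorsOn (mcolor k m) S).card ≤ s → S.card ≤ (s + 1) ^ m := by
  intro m
  induction m with
  | zero =>
      intro S s _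
      calc S.card ≤ Fintype.card (Fin 0 → Fin (k + 1)) := Finset.card_le_univ S
        _ = 1 := by simp
        _ ≤ (s + 1) ^ 0 := by simp
  | succ m ih =>
      intro S s hc
      rcases S.eq_empty_or_nonempty with rfl | hSne
      · simp
      set H : Finset (Fin (k + 1)) := S.image (fun u => u 0) with hH
      have hHne : H.Nonempty := hSne.image _
      have h1 : H.card ≤ s + 1 := by
        have hsub : H.erase (H.max' hHne) ⊆ colorsOn (mcolor k (m + 1)) S := by
          intro a ha
          obtain ⟨haM, haH⟩ := Finset.mem_erase.mp ha
          obtain ⟨u, hu, hu0⟩ := Finset.mem_image.mp haH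
          obtain ⟨v, hv, hv0⟩ := Finset.mem_image.mp (H.max'_mem hHne)
          have hne : u ≠ v := fun h => haM (by rw [← hu0, h, hv0])
          refine mem_colorsOn_iff.mpr ⟨u, hu, v, hv, hne, ?_⟩
          rw [show mcolor k (m+1) u v =
              if u 0 = v 0 then mcolor k m (Fin.tail u) (Fin.tail v) else min (u 0) (v 0)
              from rfl,
            if_neg (show u 0 ≠ v 0 from fun h => haM (by rw [← hu0, h, hv0])), hu0, hv0]
          exact min_eq_left (H.le_max' a haH)
        have := (Finset.card_le_card hsub).trans hc
        have hcard := Finset.card_erase_of_mem (H.max'_mem hHne)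
        omega
      have h2 : ∀ a : Fin (k + 1),
          (S.filter (fun u => u 0 = a)).card ≤ (s + 1) ^ m := by
        intro a
        set B := S.filter (fun u => u 0 = a) with hB
        set T := B.image (fun u : Fin (m+1) → Fin (k+1) =>
          (Fin.tail u : Fin m → Fin (k+1))) with hT
        have hinj : Set.InjOn (fun u : Fin (m+1) → Fin (k+1) =>
            (Fin.tail u : Fin m → Fin (k+1))) ↑B := by
          intro u hu v hv ht
          have hu0 := (Finset.mem_filter.mp hu).2
          have hv0 := (Finset.mem_filter.mp hv).2
          exact eq_of_head_tail (hu0.trans hv0.symm) ht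
        have hcardT : B.card = T.card := (Finset.card_image_of_injOn hinj).symm
        have hsub : colorsOn (mcolor k m) T ⊆ colorsOn (mcolor k (m + 1)) S := by
          intro x hx
          obtain ⟨u', hu', v', hv', hne', rfl⟩ := mem_colorsOn_iff.mp hx
          obtain ⟨u, hu, rfl⟩ := Finset.mem_image.mp hu'
          obtain ⟨v, hv, rfl⟩ := Finset.mem_image.mp hv'
          have hu0 := (Finset.mem_filter.mp hu).2
          have hv0 := (Finset.mem_filter.mp hv).2
          have hne : u ≠ v := fun h => hne' (h ▸ rfl)
          refine mem_colorsOn_iff.mpr ⟨u, (Finset.mem_filter.mp hu).1, v,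
            (Finset.mem_filter.mp hv).1, hne, ?_⟩
          rw [show mcolor k (m+1) u v =
              if u 0 = v 0 then mcolor k m (Fin.tail u) (Fin.tail v) else min (u 0) (v 0)
              from rfl,
            if_pos (hu0.trans hv0.symm)]
        rw [hcardT]
        exact ih T s ((Finset.card_le_card hsub).trans hc)
      have h3 : S.card = ∑ a ∈ H, (S.filter (fun u => u 0 = a)).card :=
        Finset.card_eq_sum_card_fiberwise (fun u hu => Finset.mem_image_of_mem _ hu)
      calc S.card = ∑ a ∈ H, (S.filter (fun u => u 0 = a)).card := h3
        _ ≤ ∑ _a ∈ H, (s + 1) ^ m := Finset.sum_le_sum (fun a _ => h2 a)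
        _ = H.card * (s + 1) ^ m := by rw [Finset.sum_const, smul_eq_mul]
        _ ≤ (s + 1) * (s + 1) ^ m := Nat.mul_le_mul_right _ h1
        _ = (s + 1) ^ (m + 1) := (pow_succ' _ _).symm

/-- The coloring of `K_{(k+1)^m}` transported from `mcolor` and squeezed into `Fin k`. -/
def bigColor (k m : ℕ) (hk : 0 < k) (x y : Fin ((k + 1) ^ m)) : Fin k :=
  ⟨min (mcolor k m (finFunctionFinEquiv.symm x) (finFunctionFinEquiv.symm y)).val (k - 1),
    by omega⟩

lemma bigColor_comm (k m : ℕ) (hk : 0 < k) (x y : Fin ((k + 1) ^ m)) :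
    bigColor k m hk x y = bigColor k m hk y x := by
  simp only [bigColor, mcolor_comm]

lemma bigColor_castSucc (k m : ℕ) (hk : 0 < k) {x y : Fin ((k + 1) ^ m)} (h : x ≠ y) :
    Fin.castSucc (bigColor k m hk x y)
      = mcolor k m (finFunctionFinEquiv.symm x) (finFunctionFinEquiv.symm y) := by
  have hne : finFunctionFinEquiv.symm x ≠ finFunctionFinEquiv.symm y :=
    fun he => h (finFunctionFinEquiv.symm.injective he)
  have hlt := mcolor_lt k m _ _ hne
  apply Fin.ext
  simp only [Fin.coe_castSucc, bigColor]
  omega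

lemma bigColor_gallai (k m : ℕ) (hk : 0 < k) (x y z : Fin ((k + 1) ^ m)) :
    bigColor k m hk x y = bigColor k m hk x z ∨
      bigColor k m hk x y = bigColor k m hk y z ∨
      bigColor k m hk x z = bigColor k m hk y z := by
  rcases mcolor_gallai k m (finFunctionFinEquiv.symm x) (finFunctionFinEquiv.symm y)
      (finFunctionFinEquiv.symm z) with h | h | h
  · exact Or.inl (Fin.ext (by simp only [bigColor, h]))
  · exact Or.inr (Or.inl (Fin.ext (by simp only [bigColor, h])))
  · exact Or.inr (Or.inr (Fin.ext (by simp only [bigColor, h])))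

lemma isGallai_bigColor (k m : ℕ) (hk : 0 < k) : IsGallai (bigColor k m hk) :=
  ⟨bigColor_comm k m hk, fun a b d _ _ _ h => by
    rcases bigColor_gallai k m hk a b d with h' | h' | h' <;> tauto⟩

lemma bigColor_card (k m : ℕ) (hk : 0 < k) (S : Finset (Fin ((k + 1) ^ m))) (s : ℕ)
    (h : (colorsOn (bigColor k m hk) S).card ≤ s) : S.card ≤ (s + 1) ^ m := by
  set S' := S.image (fun x => finFunctionFinEquiv.symm x) with hS'
  have hcard : S'.card = S.card :=
    Finset.card_image_of_injective _ (fun a b hab => finFunctionFinEquiv.symm.injective hab)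
  have hsub : colorsOn (mcolor k m) S' ⊆ (colorsOn (bigColor k m hk) S).image Fin.castSucc := by
    intro x hx
    obtain ⟨u', hu', v', hv', hne', rfl⟩ := mem_colorsOn_iff.mp hx
    obtain ⟨u, hu, rfl⟩ := Finset.mem_image.mp hu'
    obtain ⟨v, hv, rfl⟩ := Finset.mem_image.mp hv'
    have hne : u ≠ v := fun h => hne' (h ▸ rfl)
    refine Finset.mem_image.mpr ⟨bigColor k m hk u v, ?_, bigColor_castSucc k m hk hne⟩
    exact mem_colorsOn_iff.mpr ⟨u, hu, v, hv, hne, rfl⟩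
  have : (colorsOn (mcolor k m) S').card ≤ s :=
    le_trans (le_trans (Finset.card_le_card hsub) (Finset.card_image_le)) h
  have := mcolor_card k m S' s this
  omega

lemma chainLemma (k : ℕ) (hk : 2 ≤ k) : ∀ (L : ℕ) {n : ℕ} (c : Fin n → Fin n → Fin k)
    (W : Finset (Fin n)), k ^ L ≤ W.card →
    ∃ (f : Fin L → Fin n) (g : Fin L → Fin k), Function.Injective f ∧ (∀ i, f i ∈ W) ∧
      ∀ i j : Fin L, i < j → c (f i) (f j) = g i := by
  intro L
  induction L with
  | zero =>
      intro n c W _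
      exact ⟨Fin.elim0, Fin.elim0, fun i => i.elim0, fun i => i.elim0, fun i => i.elim0⟩
  | succ L ih =>
      intro n c W hW
      have hWne : W.Nonempty :=
        Finset.card_pos.mp (lt_of_lt_of_le (Nat.pow_pos (by omega)) hW)
      obtain ⟨v, hv⟩ := hWne
      have hsum : ∑ i : Fin k, ((W.erase v).filter (fun w => c v w = i)).card
          = (W.erase v).card :=
        (Finset.card_eq_sum_card_fiberwise (fun w _ => Finset.mem_univ (c v w))).symm
      have hex : ∃ i : Fin k, k ^ L ≤ ((W.erase v).filter (fun w => c v w = i)).card := by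
        by_contra hcon
        push_neg at hcon
        have hle : ∑ i : Fin k, ((W.erase v).filter (fun w => c v w = i)).card
            ≤ (Finset.univ : Finset (Fin k)).card * (k ^ L - 1) := by
          apply Finset.sum_le_card_nsmul
          intro i _
          have := hcon i
          omega
        have hcard : (W.erase v).card = W.card - 1 := Finset.card_erase_of_mem hv
        have huniv : (Finset.univ : Finset (Fin k)).card = k :=
          Finset.card_univ.trans (Fintype.card_fin k)
        have hpos : 0 < k ^ L := Nat.pow_pos (by omega)
        have hpos2 : 0 < k ^ (L + 1) := Nat.pow_pos (by omega)
        rw [hsum, hcard, huniv] at hle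
        have h2 : k * (k ^ L - 1) + k = k ^ (L + 1) := by
          rw [← Nat.mul_succ, Nat.succ_eq_add_one, Nat.sub_add_cancel hpos, pow_succ,
            Nat.mul_comm]
        omega
      obtain ⟨i, hi⟩ := hex
      obtain ⟨f', g', hinj', hmem', hcol'⟩ := ih c _ hi
      refine ⟨Fin.cons v f', Fin.cons i g', ?_, ?_, ?_⟩
      · rw [Fin.cons_injective_iff]
        refine ⟨?_, hinj'⟩
        rintro ⟨j, hj⟩
        have := hmem' j
        rw [hj] at this
        exact (Finset.mem_erase.mp (Finset.mem_filter.mp this).1).1 rfl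
      · intro j
        cases j using Fin.cases with
        | zero => simpa using hv
        | succ a =>
            have := hmem' a
            simp only [Fin.cons_succ]
            exact Finset.mem_of_mem_erase (Finset.mem_filter.mp this).1
      · intro a b hab
        cases a using Fin.cases with
        | zero =>
            cases b using Fin.cases with
            | zero => exact absurd hab (lt_irrefl _)
            | succ b' =>
                simp only [Fin.cons_zero, Fin.cons_succ]
                exact (Finset.mem_filter.mp (hmem' b')).2
        | succ a' =>
            cases b using Fin.cases with
            | zero => exact absurd hab (Fin.not_lt.mpr (Fin.zero_le _))
            | succ b' =>
                simp only [Fin.cons_succ]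
                exact hcol' a' b' (Fin.succ_lt_succ_iff.mp hab)

lemma monoLemma (k p : ℕ) (hk : 2 ≤ k)
    (c : Fin (k ^ (k * p + 1)) → Fin (k ^ (k * p + 1)) → Fin k)
    (hsymm : ∀ a b, c a b = c b a) :
    ∃ S : Finset (Fin (k ^ (k * p + 1))), S.card = p ∧ (colorsOn c S).card ≤ 1 := by
  obtain ⟨f, g, hinj, -, hcol⟩ := chainLemma k hk (k * p + 1) c Finset.univ
    (by rw [Finset.card_univ, Fintype.card_fin])
  have hex : ∃ i : Fin k, p ≤ ((Finset.univ : Finset (Fin (k * p + 1))).filter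
      (fun a => g a = i)).card := by
    by_contra hcon
    push_neg at hcon
    have hsum : ∑ i : Fin k, ((Finset.univ : Finset (Fin (k * p + 1))).filter
        (fun a => g a = i)).card = k * p + 1 := by
      rw [← Finset.card_eq_sum_card_fiberwise (fun a _ => Finset.mem_univ (g a)),
        Finset.card_univ, Fintype.card_fin]
    have hle : ∑ i : Fin k, ((Finset.univ : Finset (Fin (k * p + 1))).filter
        (fun a => g a = i)).card ≤ (Finset.univ : Finset (Fin k)).card * (p - 1) := by
      apply Finset.sum_le_card_nsmul
      intro i _
      have := hcon i
      omega
    rw [hsum, Finset.card_univ, Fintype.card_fin] at hle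
    have h2 : k * (p - 1) + k = k * p := by
      rcases Nat.eq_zero_or_pos p with rfl | hp
      · exfalso; have := hcon (g 0); simp at this
      · rw [← Nat.mul_succ, Nat.succ_eq_add_one, Nat.sub_add_cancel hp]
    omega
  obtain ⟨i, hi⟩ := hex
  obtain ⟨A, hAsub, hAcard⟩ := Finset.exists_subset_card_eq hi
  refine ⟨A.image f, ?_, ?_⟩
  · rw [Finset.card_image_of_injective _ hinj, hAcard]
  · have hsub : colorsOn c (A.image f) ⊆ {i} := by
      intro x hx
      obtain ⟨u, hu, v, hv, hne, rfl⟩ := mem_colorsOn_iff.mp hx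
      obtain ⟨a, ha, rfl⟩ := Finset.mem_image.mp hu
      obtain ⟨b, hb, rfl⟩ := Finset.mem_image.mp hv
      have hab : a ≠ b := fun h => hne (h ▸ rfl)
      have hga : g a = i := (Finset.mem_filter.mp (hAsub ha)).2
      have hgb : g b = i := (Finset.mem_filter.mp (hAsub hb)).2
      rcases hab.lt_or_gt with h | h
      · rw [hcol a b h, hga]; exact Finset.mem_singleton_self i
      · rw [hsymm, hcol b a h, hgb]; exact Finset.mem_singleton_self i
    calc (colorsOn c (A.image f)).card ≤ ({i} : Finset (Fin k)).card :=
          Finset.card_le_card hsub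
      _ = 1 := Finset.card_singleton i

lemma root_arith (m p : ℕ) (hm : 2 ≤ m)
    (hr : 3 ≤ ⌊((p : ℝ) - 1) ^ ((1 : ℝ) / (m : ℝ))⌋₊) :
    (⌊((p : ℝ) - 1) ^ ((1 : ℝ) / (m : ℝ))⌋₊) ^ m + 1 ≤ p := by
  set x : ℝ := ((p : ℝ) - 1) ^ ((1 : ℝ) / (m : ℝ)) with hx
  set r : ℕ := ⌊x⌋₊ with hrdef
  have hm0 : (m : ℝ) ≠ 0 := Nat.cast_ne_zero.mpr (by omega)
  have hp1 : 1 ≤ p := by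
    by_contra hcon
    interval_cases p
    have hneg : ((0 : ℕ) : ℝ) - 1 < 0 := by norm_num
    have : x = Real.exp (Real.log (((0 : ℕ) : ℝ) - 1) * ((1 : ℝ) / (m : ℝ))) *
        Real.cos (((1 : ℝ) / (m : ℝ)) * Real.pi) := by
      rw [hx]; exact Real.rpow_def_of_neg hneg _
    have hlog : Real.log (((0 : ℕ) : ℝ) - 1) = 0 := by
      norm_num
    have hxle : x ≤ 1 := by
      rw [this, hlog, zero_mul, Real.exp_zero, one_mul]
      exact Real.cos_le_one _
    have : r ≤ 1 := by
      calc r = ⌊x⌋₊ := hrdef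
        _ ≤ ⌊(1 : ℝ)⌋₊ := Nat.floor_mono hxle
        _ = 1 := by norm_num
    omega
  have hb : (0 : ℝ) ≤ (p : ℝ) - 1 := by
    have : (1 : ℝ) ≤ (p : ℝ) := by exact_mod_cast hp1
    linarith
  have hx0 : 0 ≤ x := Real.rpow_nonneg hb _
  have hfl : (r : ℝ) ≤ x := Nat.floor_le hx0
  have hxm : x ^ m = (p : ℝ) - 1 := by
    rw [hx, ← Real.rpow_natCast (((p : ℝ) - 1) ^ ((1 : ℝ) / (m : ℝ))) m,
      ← Real.rpow_mul hb]
    rw [show (1 : ℝ) / (m : ℝ) * (m : ℝ) = 1 by field_simp]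
    exact Real.rpow_one _
  have hfin : ((r : ℝ)) ^ m ≤ (p : ℝ) - 1 := by
    calc ((r : ℝ)) ^ m ≤ x ^ m := pow_le_pow_left₀ (Nat.cast_nonneg r) hfl m
      _ = (p : ℝ) - 1 := hxm
  have : ((r ^ m : ℕ) : ℝ) + 1 ≤ (p : ℝ) := by push_cast; linarith
  exact_mod_cast this

theorem gallaiNum_mth_root_lower (m p k : ℕ) (hm : 2 ≤ m)
    (hr : 3 ≤ ⌊((p : ℝ) - 1) ^ ((1 : ℝ) / (m : ℝ))⌋₊)
    (hk : ⌊((p : ℝ) - 1) ^ ((1 : ℝ) / (m : ℝ))⌋₊ - 1 ≤ k) :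
    (k + 1) ^ m + 1 ≤ gallaiNum k (⌊((p : ℝ) - 1) ^ ((1 : ℝ) / (m : ℝ))⌋₊ - 1) p ∧
    ∃ c : Fin ((k + 1) ^ m) → Fin ((k + 1) ^ m) → Fin k, IsGallai c ∧
      ∀ S : Finset (Fin ((k + 1) ^ m)), S.card = p →
        ⌊((p : ℝ) - 1) ^ ((1 : ℝ) / (m : ℝ))⌋₊ ≤ (colorsOn c S).card := by
  have hp := root_arith m p hm hr
  generalize hgen : ⌊((p : ℝ) - 1) ^ ((1 : ℝ) / (m : ℝ))⌋₊ = r at hr hk hp ⊢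
  have hk0 : 0 < k := by omega
  have hk2 : 2 ≤ k := by omega
  set c := bigColor k m hk0 with hc
  -- every p-set sees at least r colors
  have hmain : ∀ S : Finset (Fin ((k + 1) ^ m)), S.card = p →
      r ≤ (colorsOn c S).card := by
    intro S hS
    by_contra hlt
    push_neg at hlt
    have h1 : (colorsOn c S).card ≤ r - 1 := by omega
    have h2 := bigColor_card k m hk0 S (r - 1) h1
    rw [show r - 1 + 1 = r by omega] at h2
    omega
  constructor
  · -- lower bound on gallaiNum
    unfold gallaiNum
    have hne : {n : ℕ | 0 < n ∧ ∀ c' : Fin n → Fin n → Fin k, IsGallai c' →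
        ∃ S : Finset (Fin n), S.card = p ∧ (colorsOn c' S).card ≤ r - 1}.Nonempty := by
      refine ⟨k ^ (k * p + 1), Nat.pow_pos (by omega), fun c' hg => ?_⟩
      obtain ⟨S, hS, hcol⟩ := monoLemma k p hk2 c' hg.1
      exact ⟨S, hS, by omega⟩
    have hmem := Nat.sInf_mem hne
    obtain ⟨hpos, hprop⟩ := hmem
    set n := sInf {n : ℕ | 0 < n ∧ ∀ c' : Fin n → Fin n → Fin k, IsGallai c' →
        ∃ S : Finset (Fin n), S.card = p ∧ (colorsOn c' S).card ≤ r - 1} with hn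
    by_contra hcon
    push_neg at hcon
    have hle : n ≤ (k + 1) ^ m := by omega
    set c'' : Fin n → Fin n → Fin k :=
      fun x y => c (Fin.castLE hle x) (Fin.castLE hle y) with hc''
    have hg'' : IsGallai c'' := by
      constructor
      · intro a b; exact bigColor_comm k m hk0 _ _
      · intro a b d _ _ _ h
        rcases bigColor_gallai k m hk0 (Fin.castLE hle a) (Fin.castLE hle b)
          (Fin.castLE hle d) with h' | h' | h' <;> tauto
    obtain ⟨S, hS, hcol⟩ := hprop c'' hg''
    set S' := S.image (Fin.castLE hle) with hS'
    have hcardS' : S'.card = p := by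
      rw [hS', Finset.card_image_of_injective _ (Fin.castLE_injective hle), hS]
    have hsub : colorsOn c S' ⊆ colorsOn c'' S := by
      intro x hx
      obtain ⟨u', hu', v', hv', hne', rfl⟩ := mem_colorsOn_iff.mp hx
      obtain ⟨u, hu, rfl⟩ := Finset.mem_image.mp hu'
      obtain ⟨v, hv, rfl⟩ := Finset.mem_image.mp hv'
      have huv : u ≠ v := fun h => hne' (h ▸ rfl)
      exact mem_colorsOn_iff.mpr ⟨u, hu, v, hv, huv, rfl⟩
    have := hmain S' hcardS'
    have := (Finset.card_le_card hsub).trans hcol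
    omega
  · exact ⟨c, isGallai_bigColor k m hk0, hmain⟩
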